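/- Let ξ : ℕ → ℕ be the Collatz map and ξₙ its n-fold iterate. For each natural number n, the set {ω ∈ ℕ : ξₙ(ω) is even} can be written as a finite union of pairwise disjoint arithmetic progressions of the form {p + r·k : k ∈ ℕ} with p ∈ ℕ and r ≥ 1. -/

import Mathlib

/-- The Collatz map. -/
def collatz (n : ℕ) : ℕ := if n % 2 = 0 then n / 2 else 3 * n + 1

lemma collatz_key (j : ℕ) : ∀ (n k a : ℕ),
    ∃ m, collatz^[n] (a + 2^(n+j)*k) = collatz^[n] a + 2^j * m := by
  intro n
  induction n with
  | zero => intro k a; exact ⟨k, by simp⟩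
  | succ n ih =>
    intro k a
    rw [Function.iterate_succ_apply, Function.iterate_succ_apply]
    set M := 2^(n+j) with hM
    have hpow : 2^(n+1+j) = 2*M := by rw [hM]; ring
    rw [hpow]
    rcases Nat.even_or_odd a with ha | ha
    · have ha2 : a % 2 = 0 := Nat.even_iff.mp ha
      have h2 : collatz (a + 2*M*k) = collatz a + M * k := by
        unfold collatz
        rw [show 2*M*k = 2*(M*k) by ring]
        set N := M * k with hN
        have hmod : (a + 2*N) % 2 = 0 := by omega
        rw [if_pos hmod, if_pos ha2]
        omega
      rw [h2]; exact ih k (collatz a)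
    · have ha2 : a % 2 = 1 := Nat.odd_iff.mp ha
      have h2 : collatz (a + 2*M*k) = collatz a + M * (6*k) := by
        unfold collatz
        rw [show 2*M*k = 2*(M*k) by ring]
        set N := M * k with hN
        rw [if_neg (by omega), if_neg (by omega)]
        ring
      rw [h2]; exact ih (6*k) (collatz a)

lemma collatz_parity (n a k : ℕ) :
    collatz^[n] (a + 2^(n+1)*k) % 2 = collatz^[n] a % 2 := by
  obtain ⟨m, hm⟩ := collatz_key 1 n k a
  rw [hm]; omega

theorem collatz_iterate_even_preimage_is_finite_union_of_APs (n : ℕ) :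
    ∃ s : Finset (ℕ × ℕ),
      (∀ q ∈ s, 1 ≤ q.2) ∧
      ((s : Set (ℕ × ℕ)).Pairwise fun q q' =>
        Disjoint {x : ℕ | ∃ k : ℕ, x = q.1 + q.2 * k}
          {x : ℕ | ∃ k : ℕ, x = q'.1 + q'.2 * k}) ∧
      {ω : ℕ | collatz^[n] ω % 2 = 0} =
        ⋃ q ∈ s, {x : ℕ | ∃ k : ℕ, x = q.1 + q.2 * k} := by
  set M := 2^(n+1) with hM
  have hMpos : 0 < M := Nat.pow_pos (by norm_num)
  refine ⟨((Finset.range M).filter fun p => collatz^[n] p % 2 = 0).image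
    (fun p => (p, M)), ?_, ?_, ?_⟩
  · intro q hq
    simp only [Finset.mem_image, Finset.mem_filter, Finset.mem_range] at hq
    obtain ⟨p, _, rfl⟩ := hq
    exact hMpos
  · intro q hq q' hq' hne
    simp only [Finset.coe_image, Set.mem_image, Finset.mem_coe,
      Finset.mem_filter, Finset.mem_range] at hq hq'
    obtain ⟨p, ⟨hp, _⟩, rfl⟩ := hq
    obtain ⟨p', ⟨hp', _⟩, rfl⟩ := hq'
    have hpp : p ≠ p' := fun h => hne (by rw [h])
    rw [Set.disjoint_left]
    rintro x ⟨k, rfl⟩ ⟨k', hk'⟩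
    simp only at hk'
    have h1 : (p + M * k) % M = p := by
      rw [Nat.add_mul_mod_self_left, Nat.mod_eq_of_lt hp]
    have h2 : (p' + M * k') % M = p' := by
      rw [Nat.add_mul_mod_self_left, Nat.mod_eq_of_lt hp']
    rw [hk', h2] at h1
    exact hpp h1.symm
  · ext ω
    simp only [Set.mem_setOf_eq, Set.mem_iUnion, Finset.mem_image,
      Finset.mem_filter, Finset.mem_range, exists_prop]
    constructor
    · intro h
      refine ⟨(ω % M, M), ⟨ω % M, ⟨Nat.mod_lt _ hMpos, ?_⟩, rfl⟩, ω / M, ?_⟩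
      · have := collatz_parity n (ω % M) (ω / M)
        rw [← hM, Nat.mod_add_div ω M] at this
        omega
      · exact (Nat.mod_add_div ω M).symm
    · rintro ⟨q, ⟨p, ⟨hp, hpar⟩, rfl⟩, k, rfl⟩
      simp only
      have := collatz_parity n p k
      rw [← hM] at this
      omega
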